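/- arXiv:1502.05813 — 2 statements merged into one kernel-verified Lean document; each statement's English description precedes it below -/
import Mathlib

section
/- Let n ≥ 3 and let ζ₂, …, ζₙ be scalars, each equal to 0, 1/2, or 1, such that ζᵢ ≠ ζⱼ for some i, j. Let J(ζ) be the multiplication on ℂⁿ with e₁e₁ = e₁ and e₁eᵢ = eᵢe₁ = ζᵢeᵢ for 2 ≤ i ≤ n. Then J₃ lies in closure(Orb(J(ζ))). -/
noncomputable section

abbrev V (n : ℕ) : Type := Fin n → ℂ

abbrev Bil (n : ℕ) : Type := V n →ₗ[ℂ] V n →ₗ[ℂ] V n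

instance BilTop (n : ℕ) : TopologicalSpace (Bil n) :=
  TopologicalSpace.induced (fun μ : Bil n => fun x y : V n => μ x y) inferInstance

/-- The change-of-basis action of a linear automorphism on multiplications. -/
def act {n : ℕ} (g : V n ≃ₗ[ℂ] V n) (μ : Bil n) : Bil n :=
  LinearMap.mk₂ ℂ (fun x y => g (μ (g.symm x) (g.symm y)))
    (fun x x' y => by simp)
    (fun c x y => by simp)
    (fun x y y' => by simp)
    (fun c x y => by simp)

/-- The orbit of a multiplication under the change-of-basis action. -/
def orb {n : ℕ} (μ : Bil n) : Set (Bil n) :=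
  Set.range fun g : V n ≃ₗ[ℂ] V n => act g μ

/-- Two multiplications are isomorphic iff they lie in the same orbit. -/
def Isom {n : ℕ} (μ ν : Bil n) : Prop := ∃ g : V n ≃ₗ[ℂ] V n, act g μ = ν

def levelOne {n : ℕ} (lam : Bil n) : Prop :=
  lam ≠ 0 ∧ closure (orb lam) ⊆ orb lam ∪ {0}

def levelTwo {n : ℕ} (lam : Bil n) : Prop :=
  (∀ μ ∈ closure (orb lam) \ orb lam, closure (orb μ) ⊆ orb μ ∪ {0}) ∧
  ∃ μ ∈ closure (orb lam) \ orb lam, μ ≠ 0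

/-- `E n k` is the standard basis vector `e_{k+1}` of `ℂⁿ` (0-indexed `k`). -/
def E (n k : ℕ) : V n := fun m => if (m : ℕ) = k then 1 else 0

/-- The bilinear multiplication determined by a table of products of basis vectors. -/
def ofTable {n : ℕ} (c : Fin n → Fin n → V n) : Bil n :=
  LinearMap.mk₂ ℂ (fun x y => ∑ i : Fin n, ∑ j : Fin n, (x i * y j) • c i j)
    (fun x x' y => by
      simp [add_mul, add_smul, Finset.sum_add_distrib])
    (fun a x y => by
      simp [Finset.smul_sum, smul_smul, mul_assoc])
    (fun x y y' => by
      simp [mul_add, add_smul, Finset.sum_add_distrib])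
    (fun a x y => by
      simp [Finset.smul_sum, smul_smul, mul_assoc, mul_left_comm])

def JordanMul {n : ℕ} (lam : Bil n) : Prop :=
  (∀ x y : V n, lam x y = lam y x) ∧
  ∀ x y : V n, lam (lam x x) (lam y x) = lam (lam (lam x x) y) x

def LieMul {n : ℕ} (lam : Bil n) : Prop :=
  (∀ x : V n, lam x x = 0) ∧
  ∀ x y z : V n, lam x (lam y z) + lam y (lam z x) + lam z (lam x y) = 0

def AssocMul {n : ℕ} (lam : Bil n) : Prop :=
  ∀ x y z : V n, lam (lam x y) z = lam x (lam y z)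
/-- `J₁`: `e₁·e₁ = e₁`. -/
def J1 (n : ℕ) : Bil n :=
  ofTable fun i j => if i.val = 0 ∧ j.val = 0 then E n 0 else 0

/-- `J₂`: `e₁·e₁ = e₁`, `e₁·eᵢ = eᵢ·e₁ = eᵢ` for `2 ≤ i ≤ n`. -/
def J2 (n : ℕ) : Bil n :=
  ofTable fun i j =>
    if i.val = 0 then E n j.val else if j.val = 0 then E n i.val else 0

/-- `J₃`: `e₁·e₂ = e₂·e₁ = e₃`. -/
def J3 (n : ℕ) : Bil n :=
  ofTable fun i j =>
    if (i.val = 0 ∧ j.val = 1) ∨ (i.val = 1 ∧ j.val = 0) then E n 2 else 0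
/-- `J(ζ)`: `e₁e₁ = e₁`, `e₁eᵢ = eᵢe₁ = ζᵢ eᵢ` for `2 ≤ i ≤ n`. -/
def Jzeta (n : ℕ) (ζ : Fin n → ℂ) : Bil n :=
  ofTable fun i j =>
    if i.val = 0 ∧ j.val = 0 then E n 0
    else if i.val = 0 ∧ 1 ≤ j.val then ζ j • E n j.val
    else if j.val = 0 ∧ 1 ≤ i.val then ζ i • E n i.val
    else 0

lemma ofTable_apply {n : ℕ} (c : Fin n → Fin n → V n) (u v : V n) (m : Fin n) :
    ofTable c u v m = ∑ i : Fin n, ∑ j : Fin n, (u i * v j) * c i j m := by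
  simp [ofTable, LinearMap.mk₂_apply, Finset.sum_apply]

lemma Jzeta_apply {n : ℕ} (hn : 0 < n) (ζ : Fin n → ℂ) (u v : V n) (m : Fin n) :
    Jzeta n ζ u v m = if m.val = 0 then u ⟨0, hn⟩ * v ⟨0, hn⟩
      else ζ m * (u ⟨0, hn⟩ * v m + u m * v ⟨0, hn⟩) := by
  set i0 : Fin n := ⟨0, hn⟩ with hi0
  have hval : ∀ k : Fin n, k.val = 0 ↔ k = i0 := by
    intro k; rw [Fin.ext_iff]
  set w : Fin n → V n := fun k => if k = i0 then (2⁻¹:ℂ) • E n 0 else ζ k • E n k.val with hw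
  have hc : ∀ i j : Fin n,
      (if i.val = 0 ∧ j.val = 0 then E n 0
        else if i.val = 0 ∧ 1 ≤ j.val then ζ j • E n j.val
        else if j.val = 0 ∧ 1 ≤ i.val then ζ i • E n i.val
        else 0)
      = (if i = i0 then w j else 0) + (if j = i0 then w i else 0) := by
    intro i j
    by_cases hi : i = i0 <;> by_cases hj : j = i0
    · simp only [hi, hj, hw, if_pos rfl, (hval i0).2 rfl, and_self, le_refl]
      funext k; simp [E]; split <;> ring
    · have hj' : ¬ (j.val = 0) := fun h => hj ((hval j).1 h)
      have hj1 : 1 ≤ j.val := Nat.one_le_iff_ne_zero.2 hj'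
      simp [hi, hj, hw, (hval i0).2 rfl, hj', hj1]
    · have hi' : ¬ (i.val = 0) := fun h => hi ((hval i).1 h)
      have hi1 : 1 ≤ i.val := Nat.one_le_iff_ne_zero.2 hi'
      simp [hi, hj, hw, (hval i0).2 rfl, hi', hi1]
    · have hi' : ¬ (i.val = 0) := fun h => hi ((hval i).1 h)
      have hj' : ¬ (j.val = 0) := fun h => hj ((hval j).1 h)
      simp [hi, hj, hi', hj']
  rw [show Jzeta n ζ u v m = ∑ i : Fin n, ∑ j : Fin n, (u i * v j) *
      ((if i.val = 0 ∧ j.val = 0 then E n 0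
        else if i.val = 0 ∧ 1 ≤ j.val then ζ j • E n j.val
        else if j.val = 0 ∧ 1 ≤ i.val then ζ i • E n i.val
        else 0) m) from ofTable_apply _ u v m]
  have step : ∀ i j : Fin n, (u i * v j) *
      ((if i.val = 0 ∧ j.val = 0 then E n 0
        else if i.val = 0 ∧ 1 ≤ j.val then ζ j • E n j.val
        else if j.val = 0 ∧ 1 ≤ i.val then ζ i • E n i.val
        else 0) m)
      = (if i = i0 then (u i0 * v j) * w j m else 0)
        + (if j = i0 then (u i * v i0) * w i m else 0) := by
    intro i j
    rw [hc i j]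
    by_cases hi : i = i0 <;> by_cases hj : j = i0 <;>
      simp [hi, hj, Pi.add_apply] <;> ring
  simp only [step, Finset.sum_add_distrib, Finset.sum_ite_eq', Finset.mem_univ, if_pos]
  rw [Finset.sum_comm]
  simp only [Finset.sum_ite_eq', Finset.mem_univ, if_pos]
  have hwm : ∀ k : Fin n, w k m = if k = i0 then (2⁻¹:ℂ) * (if m.val = 0 then 1 else 0)
      else ζ k * (if m = k then 1 else 0) := by
    intro k
    by_cases hk : k = i0
    · simp [hk, hw, E]
    · have hk' : ¬ (k.val = 0) := fun h => hk ((hval k).1 h)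
      simp [hw, if_neg hk, E, hk', Fin.ext_iff, hi0]
  by_cases hm : m = i0
  · have hm0 : m.val = 0 := by rw [hm]
    rw [if_pos hm0]
    rw [Finset.sum_eq_single i0 (fun k _ hk => by
        simp [hwm, hk, hm0, if_neg hk, show ¬ m = k from fun h => hk (by rw [← h, hm])]),
      Finset.sum_eq_single i0 (fun k _ hk => by
        simp [hwm, hk, hm0, if_neg hk, show ¬ m = k from fun h => hk (by rw [← h, hm])])]
    · simp [hwm, hm0]; ring
    · simp
    · simp
  · have hm0 : ¬ m.val = 0 := fun h => hm ((hval m).1 h)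
    rw [if_neg hm0]
    rw [Finset.sum_eq_single m (fun k _ hk => by
        by_cases hki : k = i0
        · simp [hwm, hki, hm0]
        · simp [hwm, hki, show ¬ m = k from fun h => hk h.symm]),
      Finset.sum_eq_single m (fun k _ hk => by
        by_cases hki : k = i0
        · simp [hwm, hki, hm0]
        · simp [hwm, hki, show ¬ m = k from fun h => hk h.symm])]
    · simp [hwm, hm]; ring
    · simp
    · simp

lemma J3_apply {n : ℕ} (hn : 3 ≤ n) (u v : V n) (m : Fin n) :
    J3 n u v m = if m.val = 2 then
      u ⟨0, by omega⟩ * v ⟨1, by omega⟩ + u ⟨1, by omega⟩ * v ⟨0, by omega⟩ else 0 := by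
  set i0 : Fin n := ⟨0, by omega⟩
  set i1 : Fin n := ⟨1, by omega⟩
  have hc : ∀ i j : Fin n,
      (if (i.val = 0 ∧ j.val = 1) ∨ (i.val = 1 ∧ j.val = 0) then E n 2 else 0)
      = (if i = i0 then (if j = i1 then E n 2 else 0) else 0)
        + (if i = i1 then (if j = i0 then E n 2 else 0) else 0) := by
    intro i j
    have h0 : ∀ k : Fin n, k.val = 0 ↔ k = i0 := fun k => by rw [Fin.ext_iff]
    have h1 : ∀ k : Fin n, k.val = 1 ↔ k = i1 := fun k => by rw [Fin.ext_iff]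
    by_cases hi0 : i = i0 <;> by_cases hi1 : i = i1 <;>
      by_cases hj0 : j = i0 <;> by_cases hj1 : j = i1 <;>
      simp_all [Fin.ext_iff] <;> omega
  rw [show J3 n = ofTable (fun i j => if (i.val = 0 ∧ j.val = 1) ∨ (i.val = 1 ∧ j.val = 0) then E n 2 else 0) from rfl, ofTable_apply]
  simp only [hc, Pi.add_apply]
  have step : ∀ i j : Fin n, u i * v j *
      (((if i = i0 then (if j = i1 then E n 2 else 0) else 0) : V n) m
        + ((if i = i1 then (if j = i0 then E n 2 else 0) else 0) : V n) m)
      = (if i = i0 then (if j = i1 then u i0 * v i1 * E n 2 m else 0) else 0)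
        + (if i = i1 then (if j = i0 then u i1 * v i0 * E n 2 m else 0) else 0) := by
    intro i j
    by_cases hi0 : i = i0 <;> by_cases hj1 : j = i1 <;> by_cases hi1 : i = i1 <;>
      by_cases hj0 : j = i0 <;> simp_all <;> ring
  simp only [step, Finset.sum_add_distrib, Finset.sum_ite_eq', Finset.mem_univ, if_pos]
  simp [E]
  split <;> ring

lemma act_apply {n : ℕ} (g : V n ≃ₗ[ℂ] V n) (μ : Bil n) (x y : V n) :
    act g μ x y = g (μ (g.symm x) (g.symm y)) := rfl

lemma act_act {n : ℕ} (g h : V n ≃ₗ[ℂ] V n) (μ : Bil n) :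
    act h (act g μ) = act (g.trans h) μ := by
  ext x y
  simp [act_apply]

lemma orb_act_subset {n : ℕ} (g : V n ≃ₗ[ℂ] V n) (μ : Bil n) :
    orb (act g μ) ⊆ orb μ := by
  rintro ν ⟨h, rfl⟩
  exact ⟨g.trans h, (act_act g h μ).symm⟩

lemma act_mem_orb {n : ℕ} (g : V n ≃ₗ[ℂ] V n) (μ : Bil n) : act g μ ∈ orb μ := ⟨g, rfl⟩

def Amap (n : ℕ) (hn : 3 ≤ n) (t p q : ℂ) : V n →ₗ[ℂ] V n where
  toFun x := fun m =>
    if m.val = 0 then t * x ⟨1, by omega⟩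
    else if m.val = 1 then t⁻¹ * x ⟨0, by omega⟩ + x ⟨1, by omega⟩ + p * x ⟨2, by omega⟩
    else if m.val = 2 then t⁻¹ * x ⟨0, by omega⟩ + q * x ⟨2, by omega⟩
    else x m
  map_add' x y := by funext m; simp only [Pi.add_apply]; split_ifs <;> ring
  map_smul' c x := by
    funext m
    simp only [Pi.smul_apply, smul_eq_mul, RingHom.id_apply]
    split_ifs <;> ring

def Gmap (n : ℕ) (hn : 3 ≤ n) (t p q : ℂ) : V n →ₗ[ℂ] V n where
  toFun z := fun m =>
    if m.val = 0 then
      t * z ⟨2, by omega⟩ - t * q * (p - q)⁻¹ *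
        (z ⟨1, by omega⟩ - z ⟨2, by omega⟩ - t⁻¹ * z ⟨0, by omega⟩)
    else if m.val = 1 then t⁻¹ * z ⟨0, by omega⟩
    else if m.val = 2 then (p - q)⁻¹ *
        (z ⟨1, by omega⟩ - z ⟨2, by omega⟩ - t⁻¹ * z ⟨0, by omega⟩)
    else z m
  map_add' x y := by funext m; simp only [Pi.add_apply]; split_ifs <;> ring
  map_smul' c x := by
    funext m
    simp only [Pi.smul_apply, smul_eq_mul, RingHom.id_apply]
    split_ifs <;> ring

lemma GA (n : ℕ) (hn : 3 ≤ n) (t p q : ℂ) (ht : t ≠ 0) (hpq : p ≠ q) :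
    (Gmap n hn t p q).comp (Amap n hn t p q) = LinearMap.id := by
  have hd : p - q ≠ 0 := sub_ne_zero.2 hpq
  apply LinearMap.ext; intro x
  funext m
  simp only [LinearMap.comp_apply, LinearMap.id_apply, Amap, Gmap, LinearMap.coe_mk,
    AddHom.coe_mk]
  by_cases h0 : m.val = 0
  · rw [show m = (⟨0, by omega⟩ : Fin n) from Fin.ext h0]
    norm_num; field_simp; ring
  · by_cases h1 : m.val = 1
    · rw [show m = (⟨1, by omega⟩ : Fin n) from Fin.ext h1]
      norm_num; field_simp
    · by_cases h2 : m.val = 2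
      · rw [show m = (⟨2, by omega⟩ : Fin n) from Fin.ext h2]
        norm_num; field_simp; ring
      · simp [h0, h1, h2]

lemma AG (n : ℕ) (hn : 3 ≤ n) (t p q : ℂ) (ht : t ≠ 0) (hpq : p ≠ q) :
    (Amap n hn t p q).comp (Gmap n hn t p q) = LinearMap.id := by
  have hd : p - q ≠ 0 := sub_ne_zero.2 hpq
  apply LinearMap.ext; intro x
  funext m
  simp only [LinearMap.comp_apply, LinearMap.id_apply, Amap, Gmap, LinearMap.coe_mk,
    AddHom.coe_mk]
  by_cases h0 : m.val = 0
  · rw [show m = (⟨0, by omega⟩ : Fin n) from Fin.ext h0]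
    norm_num; field_simp
  · by_cases h1 : m.val = 1
    · rw [show m = (⟨1, by omega⟩ : Fin n) from Fin.ext h1]
      norm_num
      have h1' : t * t⁻¹ = 1 := mul_inv_cancel₀ ht
      have h2' : (p - q) * (p - q)⁻¹ = 1 := mul_inv_cancel₀ hd
      linear_combination (x ⟨2, by omega⟩ - (p-q)⁻¹*(x ⟨1, by omega⟩ - x ⟨2, by omega⟩
          - t⁻¹*x ⟨0, by omega⟩)*q) * h1' + (x ⟨1, by omega⟩ - x ⟨2, by omega⟩
          - t⁻¹*x ⟨0, by omega⟩) * h2'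
    · by_cases h2 : m.val = 2
      · rw [show m = (⟨2, by omega⟩ : Fin n) from Fin.ext h2]
        norm_num; field_simp; ring
      · simp [h0, h1, h2]

/-- The degeneration family: `gl` is the basis-change whose inverse sends
`e₀ ↦ t⁻¹(e₁+e₂)`, `e₁ ↦ t e₀ + e₁`, `e₂ ↦ p e₁ + q e₂`. -/
def gl (n : ℕ) (hn : 3 ≤ n) (t p q : ℂ) (ht : t ≠ 0) (hpq : p ≠ q) : V n ≃ₗ[ℂ] V n :=
  LinearEquiv.ofLinear (Gmap n hn t p q) (Amap n hn t p q)
    (GA n hn t p q ht hpq) (AG n hn t p q ht hpq)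

lemma tendsto_bil {n : ℕ} {ι : Type} {l : Filter ι} {f : ι → Bil n} {ν : Bil n}
    (h : ∀ x y : V n, ∀ m : Fin n,
      Filter.Tendsto (fun i => f i x y m) l (nhds (ν x y m))) :
    Filter.Tendsto f l (nhds ν) := by
  have : Filter.Tendsto (fun i => (fun x y : V n => f i x y)) l
      (nhds (fun x y : V n => ν x y)) := by
    rw [tendsto_pi_nhds]
    intro x
    rw [tendsto_pi_nhds]
    intro y
    rw [tendsto_pi_nhds]
    exact fun m => h x y m
  rw [show (nhds ν : Filter (Bil n)) =
      Filter.comap (fun μ : Bil n => fun x y : V n => μ x y)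
        (nhds (fun x y : V n => ν x y)) from nhds_induced _ _]
  rw [Filter.tendsto_comap_iff]
  exact this

lemma key (n : ℕ) (hn : 3 ≤ n) (ζ : Fin n → ℂ)
    (hpq : ζ ⟨1, by omega⟩ ≠ ζ ⟨2, by omega⟩) :
    J3 n ∈ closure (orb (Jzeta n ζ)) := by
  set p : ℂ := ζ ⟨1, by omega⟩ with hp
  set q : ℂ := ζ ⟨2, by omega⟩ with hq
  have hd : p - q ≠ 0 := sub_ne_zero.2 hpq
  set μ : ℂ → Bil n := fun t =>
    if ht : t = 0 then 0 else act (gl n hn t p q ht hpq) (Jzeta n ζ) with hμ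
  have hmem : ∀ᶠ t in nhdsWithin (0:ℂ) {(0:ℂ)}ᶜ, μ t ∈ orb (Jzeta n ζ) := by
    refine Filter.eventually_of_mem self_mem_nhdsWithin (fun t ht => ?_)
    have ht' : t ≠ 0 := ht
    simp only [hμ, dif_neg ht']
    exact act_mem_orb _ _
  refine mem_closure_of_tendsto ?_ hmem
  apply tendsto_bil
  intro x y m
  set x0 : ℂ := x ⟨0, by omega⟩
  set x1 : ℂ := x ⟨1, by omega⟩
  set x2 : ℂ := x ⟨2, by omega⟩
  set y0 : ℂ := y ⟨0, by omega⟩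
  set y1 : ℂ := y ⟨1, by omega⟩
  set y2 : ℂ := y ⟨2, by omega⟩
  have h0n : (0:ℕ) < n := by omega
  have hgen : ∀ (t : ℂ), t ≠ 0 → μ t x y m =
      if m.val = 0 then
        t * (q * (x1 * (y0 + t*q*y2) + (x0 + t*q*x2) * y1))
          - t * q * (p-q)⁻¹ *
            ((p * (x1 * (y0 + t*y1 + t*p*y2) + (x0 + t*x1 + t*p*x2) * y1))
              - (q * (x1 * (y0 + t*q*y2) + (x0 + t*q*x2) * y1)) - t * (x1*y1))
      else if m.val = 1 then t * (x1*y1)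
      else if m.val = 2 then (p-q)⁻¹ *
            ((p * (x1 * (y0 + t*y1 + t*p*y2) + (x0 + t*x1 + t*p*x2) * y1))
              - (q * (x1 * (y0 + t*q*y2) + (x0 + t*q*x2) * y1)) - t * (x1*y1))
      else ζ m * (t * (x1 * y m) + t * (x m * y1)) := by
    intro t ht
    have h1' : t * t⁻¹ = 1 := mul_inv_cancel₀ ht
    simp only [hμ, dif_neg ht]
    rw [act_apply]
    rw [show (gl n hn t p q ht hpq : V n → V n) =
      (Gmap n hn t p q : V n → V n) from rfl]
    rw [show ((gl n hn t p q ht hpq).symm : V n → V n) =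
      (Amap n hn t p q : V n → V n) from rfl]
    simp only [Gmap, Amap, LinearMap.coe_mk, AddHom.coe_mk]
    by_cases h0 : m.val = 0
    · rw [if_pos h0, if_pos h0]
      simp only [Jzeta_apply h0n]
      norm_num
      linear_combination (t*q*(x1*y0 + x0*y1)
        - t*q*(p-q)⁻¹*((p-q)*(x1*y0+x0*y1) - t*(x1*y1))) * h1'
    · rw [if_neg h0, if_neg h0]
      by_cases h1 : m.val = 1
      · rw [if_pos h1, if_pos h1]
        simp only [Jzeta_apply h0n]
        norm_num
        linear_combination (t*(x1*y1)) * h1'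
      · rw [if_neg h1, if_neg h1]
        by_cases h2 : m.val = 2
        · rw [if_pos h2, if_pos h2]
          simp only [Jzeta_apply h0n]
          norm_num [-mul_eq_mul_left_iff]
          linear_combination ((p-q)⁻¹*((p-q)*(x1*y0+x0*y1) - t*(x1*y1))) * h1'
        · rw [if_neg h2, if_neg h2]
          simp only [Jzeta_apply h0n]
          rw [if_neg h0]
          simp only [if_neg h0, if_neg h1, if_neg h2]
          norm_num [-mul_eq_mul_left_iff]
          ring
  have hJ3 : J3 n x y m = if m.val = 2 then x0 * y1 + x1 * y0 else 0 := J3_apply hn x y m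
  have hev : ∀ (ψ : ℂ → ℂ), (∀ t : ℂ, t ≠ 0 → μ t x y m = ψ t) →
      Filter.Tendsto ψ (nhdsWithin (0:ℂ) {(0:ℂ)}ᶜ) (nhds (J3 n x y m)) →
      Filter.Tendsto (fun t => μ t x y m) (nhdsWithin (0:ℂ) {(0:ℂ)}ᶜ) (nhds (J3 n x y m)) := by
    intro ψ h hT
    refine Filter.Tendsto.congr' ?_ hT
    exact Filter.eventually_of_mem self_mem_nhdsWithin (fun t ht => (h t ht).symm)
  by_cases h0 : m.val = 0
  · refine hev (fun t => t * (q * (x1 * (y0 + t*q*y2) + (x0 + t*q*x2) * y1))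
          - t * q * (p-q)⁻¹ *
            ((p * (x1 * (y0 + t*y1 + t*p*y2) + (x0 + t*x1 + t*p*x2) * y1))
              - (q * (x1 * (y0 + t*q*y2) + (x0 + t*q*x2) * y1)) - t * (x1*y1)))
      (fun t ht => by rw [hgen t ht, if_pos h0]) ?_
    rw [hJ3, if_neg (by omega)]
    have hcont : Continuous (fun t : ℂ => t * (q * (x1 * (y0 + t*q*y2) + (x0 + t*q*x2) * y1))
          - t * q * (p-q)⁻¹ *
            ((p * (x1 * (y0 + t*y1 + t*p*y2) + (x0 + t*x1 + t*p*x2) * y1))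
              - (q * (x1 * (y0 + t*q*y2) + (x0 + t*q*x2) * y1)) - t * (x1*y1))) := by
      fun_prop
    have hc := hcont.tendsto 0
    norm_num at hc
    exact hc.mono_left nhdsWithin_le_nhds
  · by_cases h1 : m.val = 1
    · refine hev (fun t => t * (x1*y1))
        (fun t ht => by rw [hgen t ht, if_neg h0, if_pos h1]) ?_
      rw [hJ3, if_neg (by omega)]
      have hcont : Continuous (fun t : ℂ => t * (x1*y1)) := by fun_prop
      have hc := hcont.tendsto 0
      norm_num at hc
      exact hc.mono_left nhdsWithin_le_nhds
    · by_cases h2 : m.val = 2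
      · refine hev (fun t => (p-q)⁻¹ *
            ((p * (x1 * (y0 + t*y1 + t*p*y2) + (x0 + t*x1 + t*p*x2) * y1))
              - (q * (x1 * (y0 + t*q*y2) + (x0 + t*q*x2) * y1)) - t * (x1*y1)))
          (fun t ht => by rw [hgen t ht, if_neg h0, if_neg h1, if_pos h2]) ?_
        rw [hJ3, if_pos h2]
        have hcont : Continuous (fun t : ℂ => (p-q)⁻¹ *
            ((p * (x1 * (y0 + t*y1 + t*p*y2) + (x0 + t*x1 + t*p*x2) * y1))
              - (q * (x1 * (y0 + t*q*y2) + (x0 + t*q*x2) * y1)) - t * (x1*y1))) := by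
          fun_prop
        have hc := hcont.tendsto 0
        refine Filter.Tendsto.mono_left ?_ nhdsWithin_le_nhds
        convert hc using 2
        field_simp
        ring
      · refine hev (fun t => ζ m * (t * (x1 * y m) + t * (x m * y1)))
          (fun t ht => by rw [hgen t ht, if_neg h0, if_neg h1, if_neg h2]) ?_
        rw [hJ3, if_neg h2]
        have hcont : Continuous (fun t : ℂ => ζ m * (t * (x1 * y m) + t * (x m * y1))) := by
          fun_prop
        have hc := hcont.tendsto 0
        norm_num at hc
        exact hc.mono_left nhdsWithin_le_nhds

lemma act_perm (n : ℕ) (hn : 0 < n) (ζ : Fin n → ℂ) (τ : Equiv.Perm (Fin n))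
    (h0 : τ ⟨0, hn⟩ = ⟨0, hn⟩) :
    act (LinearEquiv.funCongrLeft ℂ ℂ τ) (Jzeta n ζ) = Jzeta n (fun k => ζ (τ k)) := by
  apply LinearMap.ext; intro x; apply LinearMap.ext; intro y
  funext m
  rw [act_apply]
  have hPe : ∀ u : V n, (LinearEquiv.funCongrLeft ℂ ℂ τ) u = u ∘ τ := fun u => rfl
  have hPs : ∀ u : V n, (LinearEquiv.funCongrLeft ℂ ℂ τ).symm u = u ∘ τ.symm := fun u => by
    rw [LinearEquiv.funCongrLeft_symm]; rfl
  rw [hPe, hPs, hPs]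
  simp only [Function.comp_apply]
  rw [show ((Jzeta n ζ) (x ∘ τ.symm) (y ∘ τ.symm)) (τ m)
    = _ from Jzeta_apply hn ζ _ _ (τ m)]
  rw [Jzeta_apply hn (fun k => ζ (τ k)) x y m]
  have hτ0 : (τ m).val = 0 ↔ m.val = 0 := by
    constructor
    · intro h
      have : τ m = τ ⟨0, hn⟩ := by rw [h0]; exact Fin.ext h
      have := τ.injective this
      rw [this]
    · intro h
      rw [show m = ⟨0, hn⟩ from Fin.ext h, h0]
  have hsymm0 : τ.symm ⟨0, hn⟩ = ⟨0, hn⟩ := by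
    rw [Equiv.symm_apply_eq, h0]
  simp only [Function.comp_apply, hsymm0, Equiv.symm_apply_apply]
  by_cases hm : m.val = 0
  · rw [if_pos (hτ0.2 hm), if_pos hm]
  · rw [if_neg (fun h => hm (hτ0.1 h)), if_neg hm]

/-- `J(ζ)` with non-constant `ζ` degenerates to `J₃`. -/
theorem Jzeta_degenerates_J3 (n : ℕ) (hn : 3 ≤ n) (ζ : Fin n → ℂ)
    (hζ : ∀ j : Fin n, 1 ≤ j.val → (ζ j = 0 ∨ ζ j = 1 / 2 ∨ ζ j = 1))
    (hne : ∃ i j : Fin n, 1 ≤ i.val ∧ 1 ≤ j.val ∧ ζ i ≠ ζ j) :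
    J3 n ∈ closure (orb (Jzeta n ζ)) := by

  obtain ⟨a, b, ha, hb, hab⟩ := hne
  have h0n : (0:ℕ) < n := by omega
  set i0 : Fin n := ⟨0, by omega⟩ with hi0
  set i1 : Fin n := ⟨1, by omega⟩ with hi1
  set i2 : Fin n := ⟨2, by omega⟩ with hi2
  have hab' : a ≠ b := fun h => hab (by rw [h])
  have ha0 : a ≠ i0 := fun h => by rw [h] at ha; simp [hi0] at ha
  have hb0 : b ≠ i0 := fun h => by rw [h] at hb; simp [hi0] at hb
  have h01 : i0 ≠ i1 := by simp [hi0, hi1, Fin.ext_iff]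
  have h02 : i0 ≠ i2 := by simp [hi0, hi2, Fin.ext_iff]
  have h12 : i1 ≠ i2 := by simp [hi1, hi2, Fin.ext_iff]
  set σ1 : Equiv.Perm (Fin n) := Equiv.swap i1 a with hσ1
  set b1 : Fin n := σ1 b with hb1
  have hb1i1 : b1 ≠ i1 := by
    intro h
    have : σ1 b1 = σ1 i1 := by rw [h]
    rw [hb1, Equiv.swap_apply_self, Equiv.swap_apply_left] at this
    exact hab' this.symm
  have hb1i0 : b1 ≠ i0 := by
    intro h
    have : σ1 b1 = σ1 i0 := by rw [h]
    rw [hb1, Equiv.swap_apply_self,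
      Equiv.swap_apply_of_ne_of_ne h01 (Ne.symm ha0)] at this
    exact hb0 this
  set σ2 : Equiv.Perm (Fin n) := Equiv.swap i2 b1 with hσ2
  set τ : Equiv.Perm (Fin n) := σ2.trans σ1 with hτ
  have hτ0 : τ i0 = i0 := by
    rw [hτ]
    simp only [Equiv.trans_apply]
    rw [hσ2, Equiv.swap_apply_of_ne_of_ne h02 (Ne.symm hb1i0),
      hσ1, Equiv.swap_apply_of_ne_of_ne h01 (Ne.symm ha0)]
  have hτ1 : τ i1 = a := by
    rw [hτ]
    simp only [Equiv.trans_apply]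
    rw [hσ2, Equiv.swap_apply_of_ne_of_ne h12 (Ne.symm hb1i1),
      hσ1, Equiv.swap_apply_left]
  have hτ2 : τ i2 = b := by
    rw [hτ]
    simp only [Equiv.trans_apply]
    rw [hσ2, Equiv.swap_apply_left, hb1, hσ1, Equiv.swap_apply_self]
  have hkey := key n hn (fun k => ζ (τ k)) (by
    show ζ (τ ⟨1, by omega⟩) ≠ ζ (τ ⟨2, by omega⟩)
    rw [show (⟨1, by omega⟩ : Fin n) = i1 from rfl,
      show (⟨2, by omega⟩ : Fin n) = i2 from rfl, hτ1, hτ2]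
    exact hab)
  have hact : Jzeta n (fun k => ζ (τ k)) = act (LinearEquiv.funCongrLeft ℂ ℂ τ) (Jzeta n ζ) :=
    (act_perm n h0n ζ τ hτ0).symm
  rw [hact] at hkey
  exact closure_mono (orb_act_subset _ _) hkey
end
end

section
/- Let n ≥ 5, let k ≥ 2 with 2k + 1 ≤ n, and let λ be the Heisenberg Lie multiplication on ℂⁿ with [e₍₂ᵢ₋₁₎, e₍₂ᵢ₎] = e₍₂ₖ₊₁₎ for 1 ≤ i ≤ k (brackets extended antisymmetrically, all other basis products zero). Then the Lie multiplication n₅,₁⊕𝔞ₙ₋₅ lies in closure(Orb(λ)). -/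
noncomputable section

/-- `n₅,₁ ⊕ 𝔞_{n-5}`: `[e₁,e₃] = e₅`, `[e₂,e₄] = e₅`. -/
def n51 (n : ℕ) : Bil n :=
  ofTable fun i j =>
    if i.val = 0 ∧ j.val = 2 then E n 4
    else if i.val = 2 ∧ j.val = 0 then -E n 4
    else if i.val = 1 ∧ j.val = 3 then E n 4
    else if i.val = 3 ∧ j.val = 1 then -E n 4
    else 0

/-- `n₅,₂ ⊕ 𝔞_{n-5}`: `[e₁,e₂] = e₄`, `[e₁,e₃] = e₅`. -/
def n52 (n : ℕ) : Bil n :=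
  ofTable fun i j =>
    if i.val = 0 ∧ j.val = 1 then E n 3
    else if i.val = 1 ∧ j.val = 0 then -E n 3
    else if i.val = 0 ∧ j.val = 2 then E n 4
    else if i.val = 2 ∧ j.val = 0 then -E n 4
    else 0

/-- `r₂ ⊕ 𝔞_{n-2}`: `[e₁,e₂] = e₂`. -/
def r2 (n : ℕ) : Bil n :=
  ofTable fun i j =>
    if i.val = 0 ∧ j.val = 1 then E n 1
    else if i.val = 1 ∧ j.val = 0 then -E n 1
    else 0

/-- `g_{n,1}(α)`: `[e₁,e₂] = α e₂`, `[e₁,eᵢ] = eᵢ` for `3 ≤ i ≤ n`. -/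
def g1 (n : ℕ) (α : ℂ) : Bil n :=
  ofTable fun i j =>
    if i.val = 0 ∧ j.val = 1 then α • E n 1
    else if i.val = 1 ∧ j.val = 0 then -(α • E n 1)
    else if i.val = 0 ∧ 2 ≤ j.val then E n j.val
    else if j.val = 0 ∧ 2 ≤ i.val then -E n i.val
    else 0

/-- `g_{n,2}`: `[e₁,e₂] = e₂ + e₃`, `[e₁,eᵢ] = eᵢ` for `3 ≤ i ≤ n`. -/
def g2 (n : ℕ) : Bil n :=
  ofTable fun i j =>
    if i.val = 0 ∧ j.val = 1 then E n 1 + E n 2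
    else if i.val = 1 ∧ j.val = 0 then -(E n 1 + E n 2)
    else if i.val = 0 ∧ 2 ≤ j.val then E n j.val
    else if j.val = 0 ∧ 2 ≤ i.val then -E n i.val
    else 0

/-- The Heisenberg Lie multiplication on `ℂⁿ` with `[e_{2i-1}, e_{2i}] = e_{2k+1}`
for `1 ≤ i ≤ k` (0-indexed: `[e_{2m}, e_{2m+1}] = e_{2k}` for `0 ≤ m < k`). -/
def heis (n k : ℕ) : Bil n :=
  ofTable fun a b =>
    if a.val % 2 = 0 ∧ a.val < 2 * k ∧ b.val = a.val + 1 then E n (2 * k)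
    else if b.val % 2 = 0 ∧ b.val < 2 * k ∧ a.val = b.val + 1 then -E n (2 * k)
    else 0


namespace Heis18

def p (k : ℕ) : ℕ → ℕ := fun i =>
  if i = 1 then 2 else if i = 2 then 1 else if i = 4 then 2*k else if i = 2*k then 4 else i

lemma p_invol {k : ℕ} (hk : 2 ≤ k) : Function.Involutive (p k) := by
  intro i; unfold p; split_ifs <;> first | contradiction | omega

def c (t : ℂ) (i : ℕ) : ℂ := if i ≤ 4 then 1 else t

def hs (n k : ℕ) (a b : ℕ) : V n :=
  if a % 2 = 0 ∧ a < 2*k ∧ b = a+1 then E n 4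
  else if b % 2 = 0 ∧ b < 2*k ∧ a = b+1 then -E n 4
  else 0

def tbl (n k : ℕ) (t : ℂ) : Fin n → Fin n → V n := fun i j =>
  (c t i.val * c t j.val) • hs n k (p k i.val) (p k j.val)

def pi' (n k : ℕ) : Fin n → Fin n := fun i =>
  if h : p k i.val < n then ⟨p k i.val, h⟩ else i

lemma pi'_val {n k : ℕ} (hk : 2 ≤ k) (hkn : 2*k+1 ≤ n) (i : Fin n) :
    (pi' n k i).val = p k i.val := by
  have hi := i.isLt
  have h : p k i.val < n := by unfold p; split_ifs <;> first | contradiction | omega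
  simp [pi', h]

lemma pi'_invol {n k : ℕ} (hk : 2 ≤ k) (hkn : 2*k+1 ≤ n) :
    Function.Involutive (pi' n k) := by
  intro i
  apply Fin.ext
  rw [pi'_val hk hkn, pi'_val hk hkn, p_invol hk]

def Bm (n k : ℕ) (t : ℂ) : V n →ₗ[ℂ] V n where
  toFun := fun x j => c t (pi' n k j).val * x (pi' n k j)
  map_add' := by intro x y; funext j; simp [mul_add]
  map_smul' := by intro a x; funext j; simp [smul_eq_mul]; ring

def Am (n k : ℕ) (t : ℂ) : V n →ₗ[ℂ] V n where
  toFun := fun x i => (c t i.val)⁻¹ * x (pi' n k i)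
  map_add' := by intro x y; funext j; simp [mul_add]
  map_smul' := by intro a x; funext j; simp [smul_eq_mul]; ring

lemma c_ne_zero {t : ℂ} (ht : t ≠ 0) (i : ℕ) : c t i ≠ 0 := by
  unfold c; split_ifs
  · exact one_ne_zero
  · exact ht

def gm (n k : ℕ) (t : ℂ) (ht : t ≠ 0) (hk : 2 ≤ k) (hkn : 2*k+1 ≤ n) :
    V n ≃ₗ[ℂ] V n :=
  LinearEquiv.ofLinear (Am n k t) (Bm n k t)
    (by
      apply LinearMap.ext; intro x
      funext i
      show (c t i.val)⁻¹ * (c t (pi' n k (pi' n k i)).val * x (pi' n k (pi' n k i))) = x i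
      rw [pi'_invol hk hkn i, inv_mul_cancel_left₀ (c_ne_zero ht i.val)])
    (by
      apply LinearMap.ext; intro x
      funext j
      show c t (pi' n k j).val * ((c t (pi' n k j).val)⁻¹ * x (pi' n k (pi' n k j))) = x j
      rw [pi'_invol hk hkn j, mul_inv_cancel_left₀ (c_ne_zero ht _)])

lemma Am_E {n k : ℕ} (t : ℂ) (hk : 2 ≤ k) (hkn : 2*k+1 ≤ n) :
    Am n k t (E n (2*k)) = E n 4 := by
  funext i
  show (c t i.val)⁻¹ * E n (2*k) (pi' n k i) = E n 4 i
  simp only [E, pi'_val hk hkn]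
  have hiff : p k i.val = 2*k ↔ i.val = 4 := by unfold p; split_ifs <;> first | contradiction | omega
  by_cases h : i.val = 4
  · have h4 : p k 4 = 2*k := by unfold p; split_ifs <;> first | contradiction | omega
    simp [h, h4, c]
  · have h1 : ¬ p k i.val = 2*k := fun hq => h (hiff.mp hq)
    simp [h1, h]

lemma Am_table {n k : ℕ} (t : ℂ) (hk : 2 ≤ k) (hkn : 2*k+1 ≤ n) (a b : Fin n) :
    Am n k t (if a.val % 2 = 0 ∧ a.val < 2 * k ∧ b.val = a.val + 1 then E n (2 * k)
      else if b.val % 2 = 0 ∧ b.val < 2 * k ∧ a.val = b.val + 1 then -E n (2 * k)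
      else 0) = hs n k a.val b.val := by
  unfold hs
  split_ifs
  · exact Am_E t hk hkn
  · rw [map_neg, Am_E t hk hkn]
  · exact map_zero _

lemma act_eq {n k : ℕ} (t : ℂ) (ht : t ≠ 0) (hk : 2 ≤ k) (hkn : 2*k+1 ≤ n) :
    act (gm n k t ht hk hkn) (heis n k) = ofTable (tbl n k t) := by
  apply LinearMap.ext; intro x; apply LinearMap.ext; intro y
  simp only [act, heis, ofTable, LinearMap.mk₂_apply, gm,
    LinearEquiv.ofLinear_apply, LinearEquiv.ofLinear_symm_apply]
  simp only [map_sum, map_smul, Am_table t hk hkn]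
  refine Fintype.sum_equiv (Function.Involutive.toPerm _ (pi'_invol hk hkn)) _ _ fun a => ?_
  refine Fintype.sum_equiv (Function.Involutive.toPerm _ (pi'_invol hk hkn)) _ _ fun b => ?_
  have hpp : ∀ x, p k (p k x) = x := p_invol hk
  simp only [Function.Involutive.coe_toPerm, tbl, Bm, LinearMap.coe_mk, AddHom.coe_mk,
    pi'_val hk hkn, hpp, smul_smul]
  congr 1
  ring

set_option maxHeartbeats 1000000 in
lemma n51_eq {n k : ℕ} (hn : 5 ≤ n) (hk : 2 ≤ k) (hkn : 2*k+1 ≤ n) :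
    n51 n = ofTable (tbl n k 0) := by
  unfold n51
  congr 1
  funext i j
  have hi := i.isLt
  have hj := j.isLt
  unfold tbl
  by_cases hi4 : i.val ≤ 4
  case neg =>
    have hz : c 0 i.val = 0 := by unfold c; rw [if_neg hi4]
    rw [hz, zero_mul, zero_smul]
    split_ifs <;> first | rfl | contradiction | omega
  by_cases hj4 : j.val ≤ 4
  case neg =>
    have hz : c 0 j.val = 0 := by unfold c; rw [if_neg hj4]
    rw [hz, mul_zero, zero_smul]
    split_ifs <;> first | rfl | contradiction | omega
  have hci : c 0 i.val = 1 := if_pos hi4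
  have hcj : c 0 j.val = 1 := if_pos hj4
  rw [hci, hcj, one_mul, one_smul]
  have hp0 : p k 0 = 0 := by unfold p; split_ifs <;> first | contradiction | omega
  have hp1 : p k 1 = 2 := by unfold p; split_ifs <;> first | contradiction | omega
  have hp2 : p k 2 = 1 := by unfold p; split_ifs <;> first | contradiction | omega
  have hp3 : p k 3 = 3 := by unfold p; split_ifs <;> first | contradiction | omega
  have hp4 : p k 4 = 2*k := by unfold p; split_ifs <;> first | contradiction | omega
  have h1 : i.val = 0 ∨ i.val = 1 ∨ i.val = 2 ∨ i.val = 3 ∨ i.val = 4 := by omega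
  have h2 : j.val = 0 ∨ j.val = 1 ∨ j.val = 2 ∨ j.val = 3 ∨ j.val = 4 := by omega
  rcases h1 with h|h|h|h|h <;> rcases h2 with h'|h'|h'|h'|h' <;>
    simp only [h, h', hp0, hp1, hp2, hp3, hp4] <;>
    unfold hs <;>
    split_ifs <;> first | rfl | contradiction | omega | (simp_all <;> omega)

end Heis18

/-- the Heisenberg multiplication with `k ≥ 2` degenerates to
`n₅,₁ ⊕ 𝔞_{n-5}`. -/
theorem heisenberg_degenerates_n51 (n k : ℕ) (hn : 5 ≤ n) (hk : 2 ≤ k)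
    (hkn : 2 * k + 1 ≤ n) :
    n51 n ∈ closure (orb (heis n k)) := by
  classical
  have hseq : Filter.Tendsto (fun m : ℕ => (((1:ℝ)/((m:ℝ)+1) : ℝ) : ℂ)) Filter.atTop (nhds 0) := by
    have h1 : Filter.Tendsto (fun n : ℕ => 1 / ((n : ℝ) + 1)) Filter.atTop (nhds 0) :=
      tendsto_one_div_add_atTop_nhds_zero_nat
    have h2 := (Complex.continuous_ofReal.tendsto 0).comp h1
    simpa [Function.comp_def, one_div] using h2
  set tseq : ℕ → ℂ := fun m => (((1:ℝ)/((m:ℝ)+1) : ℝ) : ℂ) with htseq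
  have htne : ∀ m, tseq m ≠ 0 := by
    intro m
    simp only [htseq]
    exact Complex.ofReal_ne_zero.mpr (by positivity)
  rw [Heis18.n51_eq hn hk hkn (k := k)]
  have hmem : ∀ m : ℕ, ofTable (Heis18.tbl n k (tseq m)) ∈ orb (heis n k) :=
    fun m => ⟨Heis18.gm n k (tseq m) (htne m) hk hkn, (Heis18.act_eq _ (htne m) hk hkn)⟩
  have hc : ∀ i : ℕ, Filter.Tendsto (fun m => Heis18.c (tseq m) i) Filter.atTop
      (nhds (Heis18.c 0 i)) := by
    intro i
    by_cases h : i ≤ 4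
    · simp only [Heis18.c, if_pos h]
      exact tendsto_const_nhds
    · simp only [Heis18.c, if_neg h]
      exact hseq
  have hform : ∀ (t : ℂ) (x y : V n) (m' : Fin n),
      ofTable (Heis18.tbl n k t) x y m' =
      ∑ i : Fin n, ∑ j : Fin n, (x i * y j) *
        ((Heis18.c t i.val * Heis18.c t j.val) *
          Heis18.hs n k (Heis18.p k i.val) (Heis18.p k j.val) m') := by
    intro t x y m'
    simp only [ofTable, LinearMap.mk₂_apply, Finset.sum_apply, Pi.smul_apply,
      Heis18.tbl, smul_eq_mul]
  have htend : Filter.Tendsto (fun m : ℕ => ofTable (Heis18.tbl n k (tseq m)))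
      Filter.atTop (nhds (ofTable (Heis18.tbl n k 0))) := by
    rw [nhds_induced (fun μ : Bil n => fun x y : V n => μ x y), Filter.tendsto_comap_iff]
    rw [tendsto_pi_nhds]; intro x
    rw [tendsto_pi_nhds]; intro y
    rw [tendsto_pi_nhds]; intro m'
    simp only [Function.comp_apply, hform]
    apply tendsto_finset_sum; intro i _
    apply tendsto_finset_sum; intro j _
    exact Filter.Tendsto.const_mul _ (Filter.Tendsto.mul_const _ ((hc i.val).mul (hc j.val)))
  exact mem_closure_of_tendsto htend (Filter.Eventually.of_forall hmem)
end
end
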